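/- Let M be a matroid on a finite ground set U with rank function r, with no loops (r({e}) = 1 for every e ∈ U), and let w : U → ℝ be nonnegative element weights. A function y assigning a nonnegative real y_S to each nonempty subset S ⊆ U is in the core of the matroid independent set game on (M,w) if and only if y is an optimal solution of the dual LP, i.e., y is dual-feasible (for every e ∈ U, Σ_{S : e ∈ S} y_S ≥ w(e)) and Σ_{S ⊆ U} r(S)·y_S is minimum among all dual-feasible nonnegative functions. -/

import Mathlib

open scoped Classical

noncomputable def matroidRank {α : Type*} (M : Matroid α) (S : Set α) : ℕ :=
  sSup {n : ℕ | ∃ I ⊆ S, M.Indep I ∧ I.ncard = n}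

noncomputable def matroidWorth {α : Type*} [Fintype α] (M : Matroid α) (w : α → ℝ)
    (T : Set α) : ℝ :=
  sSup {x : ℝ | ∃ I : Finset α, ↑I ⊆ T ∧ M.Indep ↑I ∧ x = ∑ e ∈ I, w e}

section helpers

variable {α : Type*} [Fintype α] {M : Matroid α}

lemma mr_eq_ncard_of_basis (hE : M.E = Set.univ) {J S : Set α} (hJ : M.IsBasis J S) :
    matroidRank M S = J.ncard := by
  have hb : ∀ n ∈ {n : ℕ | ∃ I ⊆ S, M.Indep I ∧ I.ncard = n}, n ≤ J.ncard := by
    rintro n ⟨I, hIS, hInd, rfl⟩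
    obtain ⟨J', hJ', hIJ'⟩ := hInd.subset_isBasis_of_subset hIS
      (by rw [hE]; exact Set.subset_univ _)
    have h1 : I.ncard ≤ J'.ncard := Set.ncard_le_ncard hIJ' (Set.toFinite _)
    have h2 : J'.ncard = J.ncard := by
      rw [Set.ncard_def, Set.ncard_def, hJ'.encard_eq_encard hJ]
    omega
  apply le_antisymm
  · exact csSup_le ⟨0, ∅, Set.empty_subset _, M.empty_indep, by simp⟩ hb
  · exact le_csSup ⟨J.ncard, hb⟩ ⟨J, hJ.subset, hJ.indep, rfl⟩

lemma mr_indep_le (hE : M.E = Set.univ) {I S : Set α} (hInd : M.Indep I) (hIS : I ⊆ S) :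
    I.ncard ≤ matroidRank M S := by
  obtain ⟨J, hJ⟩ := M.exists_isBasis S (by rw [hE]; exact Set.subset_univ _)
  rw [mr_eq_ncard_of_basis hE hJ]
  obtain ⟨J', hJ', hIJ'⟩ := hInd.subset_isBasis_of_subset hIS
    (by rw [hE]; exact Set.subset_univ _)
  have h1 : I.ncard ≤ J'.ncard := Set.ncard_le_ncard hIJ' (Set.toFinite _)
  have h2 : J'.ncard = J.ncard := by
    rw [Set.ncard_def, Set.ncard_def, hJ'.encard_eq_encard hJ]
  omega

lemma mr_mono (hE : M.E = Set.univ) {S T : Set α} (h : S ⊆ T) :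
    matroidRank M S ≤ matroidRank M T := by
  obtain ⟨J, hJ⟩ := M.exists_isBasis S (by rw [hE]; exact Set.subset_univ _)
  rw [mr_eq_ncard_of_basis hE hJ]
  exact mr_indep_le hE hJ.indep (hJ.subset.trans h)

lemma mr_empty (hE : M.E = Set.univ) : matroidRank M (∅ : Set α) = 0 := by
  obtain ⟨J, hJ⟩ := M.exists_isBasis ∅ (by rw [hE]; exact Set.subset_univ _)
  rw [mr_eq_ncard_of_basis hE hJ]
  have : J = ∅ := Set.subset_empty_iff.mp hJ.subset
  simp [this]

lemma mr_insert_le (hE : M.E = Set.univ) (S : Set α) (e : α) :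
    matroidRank M (insert e S) ≤ matroidRank M S + 1 := by
  obtain ⟨J, hJ⟩ := M.exists_isBasis (insert e S) (by rw [hE]; exact Set.subset_univ _)
  rw [mr_eq_ncard_of_basis hE hJ]
  have hsub : J \ {e} ⊆ S := by
    intro x hx
    rcases hJ.subset hx.1 with h | h
    · exact absurd h hx.2
    · exact h
  have h1 : (J \ {e}).ncard ≤ matroidRank M S :=
    mr_indep_le hE (hJ.indep.subset Set.diff_subset) hsub
  have h2 : J.ncard ≤ (J \ {e}).ncard + 1 := by
    calc J.ncard ≤ (insert e (J \ {e})).ncard :=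
          Set.ncard_le_ncard (fun x hx => by by_cases hxe : x = e <;> simp [hxe, hx])
            (Set.toFinite _)
      _ ≤ (J \ {e}).ncard + 1 := Set.ncard_insert_le _ _
  omega

lemma mr_extend (hE : M.E = Set.univ) {I0 A : Set α} {e : α} (hInd : M.Indep I0)
    (hsub : I0 ⊆ A) (hlt : matroidRank M A < matroidRank M (insert e A)) :
    M.Indep (insert e I0) := by
  obtain ⟨B, hB, hIB⟩ := hInd.subset_isBasis_of_subset (hsub.trans (Set.subset_insert e A))
    (by rw [hE]; exact Set.subset_univ _)
  have hBcard : B.ncard = matroidRank M (insert e A) := (mr_eq_ncard_of_basis hE hB).symm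
  have heB : e ∈ B := by
    by_contra h
    have hBA : B ⊆ A := by
      intro x hx
      rcases hB.subset hx with rfl | h2
      · exact absurd hx h
      · exact h2
    have := mr_indep_le hE hB.indep hBA
    omega
  exact hB.indep.subset (Set.insert_subset heB hIB)

lemma worth_mem (w : α → ℝ) (T : Set α) :
    matroidWorth M w T ∈ {x : ℝ | ∃ I : Finset α, ↑I ⊆ T ∧ M.Indep ↑I ∧ x = ∑ e ∈ I, w e} := by
  apply Set.Nonempty.csSup_mem
  · exact ⟨0, ∅, by simp, by simpa using M.empty_indep, by simp⟩
  · apply Set.Finite.subset (Set.finite_range (fun I : Finset α => ∑ e ∈ I, w e))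
    rintro x ⟨I, _, _, rfl⟩
    exact ⟨I, rfl⟩

lemma le_worth (w : α → ℝ) {T : Set α} {I : Finset α} (hIT : ↑I ⊆ T) (hInd : M.Indep ↑I) :
    ∑ e ∈ I, w e ≤ matroidWorth M w T := by
  apply le_csSup
  · apply Set.Finite.bddAbove
    apply Set.Finite.subset (Set.finite_range (fun I : Finset α => ∑ e ∈ I, w e))
    rintro x ⟨I, _, _, rfl⟩
    exact ⟨I, rfl⟩
  · exact ⟨I, hIT, hInd, rfl⟩


lemma weak_duality (hE : M.E = Set.univ) (w : α → ℝ)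
    (y' : Finset α → ℝ) (hy' : ∀ S : Finset α, S.Nonempty → 0 ≤ y' S)
    (hfeas : ∀ e : α, w e ≤ ∑ S ∈ (Finset.univ : Finset (Finset α)).filter (fun S => e ∈ S), y' S)
    (T : Finset α) :
    matroidWorth M w ↑T ≤
      ∑ S ∈ (Finset.univ : Finset (Finset α)).filter (fun S => (S ∩ T).Nonempty),
        (matroidRank M ↑(S ∩ T) : ℝ) * y' S := by
  have worth_mem := fun (T : Set α) => _root_.worth_mem (M := M) w T
  have mr_indep_le : ∀ {I S : Set α}, M.Indep I → I ⊆ S → I.ncard ≤ matroidRank M S :=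
    fun h1 h2 => _root_.mr_indep_le hE h1 h2
  obtain ⟨I, hIT, hInd, hval⟩ := worth_mem ↑T
  rw [hval]
  have key : ∑ e ∈ I, ∑ S ∈ (Finset.univ : Finset (Finset α)).filter (fun S => e ∈ S), y' S
      = ∑ S : Finset α, ((S ∩ I).card : ℝ) * y' S := by
    simp_rw [Finset.sum_filter]
    rw [Finset.sum_comm]
    refine Finset.sum_congr rfl fun S _ => ?_
    rw [Finset.sum_ite_mem, Finset.sum_const, Finset.inter_comm, nsmul_eq_mul]
  calc ∑ e ∈ I, w e ≤ ∑ e ∈ I, ∑ S ∈ (Finset.univ : Finset (Finset α)).filter (fun S => e ∈ S), y' S :=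
        Finset.sum_le_sum fun e _ => hfeas e
    _ = ∑ S : Finset α, ((S ∩ I).card : ℝ) * y' S := key
    _ = ∑ S ∈ (Finset.univ : Finset (Finset α)).filter (fun S => (S ∩ T).Nonempty),
          ((S ∩ I).card : ℝ) * y' S := by
        symm
        apply Finset.sum_subset (Finset.filter_subset _ _)
        intro S _ hS
        simp only [Finset.mem_filter, Finset.mem_univ, true_and] at hS
        have : S ∩ I = ∅ := by
          rw [Finset.eq_empty_iff_forall_notMem]
          intro x hx
          rw [Finset.mem_inter] at hx
          exact hS ⟨x, Finset.mem_inter.mpr ⟨hx.1, by exact_mod_cast hIT hx.2⟩⟩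
        simp [this]
    _ ≤ ∑ S ∈ (Finset.univ : Finset (Finset α)).filter (fun S => (S ∩ T).Nonempty),
          (matroidRank M ↑(S ∩ T) : ℝ) * y' S := by
        apply Finset.sum_le_sum
        intro S hS
        simp only [Finset.mem_filter, Finset.mem_univ, true_and] at hS
        have hSne : S.Nonempty := by
          obtain ⟨x, hx⟩ := hS
          exact ⟨x, (Finset.mem_inter.mp hx).1⟩
        apply mul_le_mul_of_nonneg_right _ (hy' S hSne)
        have hcard : ((S ∩ I) : Set α).ncard ≤ matroidRank M ↑(S ∩ T) := by
          apply mr_indep_le (hInd.subset ?_) ?_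
          · intro x hx
            simp only [Finset.coe_inter, Set.mem_inter_iff] at hx
            exact hx.2
          · intro x hx
            simp only [Finset.coe_inter, Set.mem_inter_iff] at hx ⊢
            exact ⟨hx.1, hIT hx.2⟩
        rw [← Finset.coe_inter, Set.ncard_coe_finset] at hcard
        exact_mod_cast hcard

lemma strong_duality (hE : M.E = Set.univ) (w : α → ℝ) (hw : ∀ e, 0 ≤ w e) :
    ∃ ystar : Finset α → ℝ,
      (∀ S : Finset α, S.Nonempty → 0 ≤ ystar S) ∧
      (∀ e : α, w e ≤ ∑ S ∈ (Finset.univ : Finset (Finset α)).filter (fun S => e ∈ S), ystar S) ∧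
      ∑ S ∈ (Finset.univ : Finset (Finset α)).filter (fun S => S.Nonempty),
          (matroidRank M ↑S : ℝ) * ystar S ≤ matroidWorth M w Set.univ := by
  have mr_mono : ∀ {S T : Set α}, S ⊆ T → matroidRank M S ≤ matroidRank M T :=
    fun h => _root_.mr_mono hE h
  have mr_empty : matroidRank M (∅ : Set α) = 0 := _root_.mr_empty hE
  have mr_insert_le : ∀ (S : Set α) (e : α),
      matroidRank M (insert e S) ≤ matroidRank M S + 1 := fun S e => _root_.mr_insert_le hE S e
  have mr_extend : ∀ {I0 A : Set α} {e : α}, M.Indep I0 → I0 ⊆ A →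
      matroidRank M A < matroidRank M (insert e A) → M.Indep (insert e I0) :=
    fun h1 h2 h3 => _root_.mr_extend hE h1 h2 h3
  have le_worth : ∀ {T : Set α} {I : Finset α}, ↑I ⊆ T → M.Indep ↑I →
      ∑ e ∈ I, w e ≤ matroidWorth M w T := fun h1 h2 => _root_.le_worth w h1 h2
  classical
  set n := Fintype.card α with hn
  set eqv := (Fintype.equivFin α) with heqv
  set σ := Tuple.sort (fun j : Fin n => -w (eqv.symm j)) with hσ
  set g : Fin n → α := fun i => eqv.symm (σ i) with hg
  have hginj : Function.Injective g := eqv.symm.injective.comp σ.injective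
  have hgsurj : Function.Surjective g := eqv.symm.surjective.comp σ.surjective
  have hgmono : ∀ i j : Fin n, i ≤ j → w (g j) ≤ w (g i) := by
    intro i j hij
    have := Tuple.monotone_sort (fun j : Fin n => -w (eqv.symm j)) hij
    simp only [Function.comp_apply] at this
    simpa [hg] using neg_le_neg_iff.mp (by linarith [this] )
  set P : ℕ → Finset α := fun k =>
    Finset.image g (Finset.univ.filter fun i : Fin n => (i : ℕ) < k) with hP
  set wseq : ℕ → ℝ := fun k => if h : k < n then w (g ⟨k, h⟩) else 0 with hwseq
  set c : ℕ → ℝ := fun k => wseq k - wseq (k + 1) with hc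
  set R : ℕ → ℕ := fun k => matroidRank M ↑(P k) with hR
  set ystar : Finset α → ℝ :=
    fun S => ∑ k ∈ (Finset.range n).filter (fun k => P (k + 1) = S), c k with hystar
  -- basic facts
  have hcnn : ∀ k, 0 ≤ c k := by
    intro k
    simp only [hc, hwseq, sub_nonneg]
    split_ifs with h1 h2
    · exact hgmono ⟨k, h2⟩ ⟨k + 1, h1⟩ (by simp [Fin.le_def])
    · omega
    · exact hw _
    · exact le_rfl
  have hmemP : ∀ (j : Fin n) (k : ℕ), g j ∈ P k ↔ (j : ℕ) < k := by
    intro j k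
    simp only [hP, Finset.mem_image, Finset.mem_filter, Finset.mem_univ, true_and]
    constructor
    · rintro ⟨i, hik, hgi⟩
      rwa [← hginj hgi]
    · intro hk
      exact ⟨j, hk, rfl⟩
  have hPstep : ∀ (k : ℕ) (hk : k < n), P (k + 1) = insert (g ⟨k, hk⟩) (P k) := by
    intro k hk
    ext e
    obtain ⟨j, rfl⟩ := hgsurj e
    rw [hmemP, Finset.mem_insert, hmemP]
    constructor
    · intro h
      rcases Nat.lt_succ_iff_lt_or_eq.mp h with h | h
      · exact Or.inr h
      · exact Or.inl (by apply congrArg; exact Fin.ext h)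
    · rintro (h | h)
      · have hjk : j = (⟨k, hk⟩ : Fin n) := hginj h
        rw [hjk]
        exact Nat.lt_succ_self k
      · omega
  have hgnotmem : ∀ (k : ℕ) (hk : k < n), g ⟨k, hk⟩ ∉ P k := by
    intro k hk h
    rw [hmemP] at h
    simp at h
  have hPn : P n = Finset.univ := by
    ext e
    obtain ⟨j, rfl⟩ := hgsurj e
    simp [hmemP, j.isLt]
  have hwseqn : wseq n = 0 := by simp [hwseq]
  have hR0 : R 0 = 0 := by
    have : P 0 = ∅ := by ext e; obtain ⟨j, rfl⟩ := hgsurj e; simp [hmemP]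
    simp [hR, this, mr_empty]
  have hRmono : ∀ k, R k ≤ R (k + 1) := by
    intro k
    apply mr_mono
    intro x hx
    obtain ⟨j, rfl⟩ := hgsurj x
    rw [Finset.mem_coe, hmemP] at hx ⊢
    omega
  have hRstep : ∀ (k : ℕ), k < n → R (k + 1) ≤ R k + 1 := by
    intro k hk
    have h1 : (↑(P (k + 1)) : Set α) = insert (g ⟨k, hk⟩) ↑(P k) := by
      rw [hPstep k hk, Finset.coe_insert]
    simp only [hR]
    rw [h1]
    exact mr_insert_le _ _
  -- feasibility (with equality)
  have hfeas : ∀ e : α, w e =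
      ∑ S ∈ (Finset.univ : Finset (Finset α)).filter (fun S => e ∈ S), ystar S := by
    intro e
    obtain ⟨j, rfl⟩ := hgsurj e
    have hmaps : ∀ k ∈ (Finset.range n).filter (fun k => g j ∈ P (k + 1)),
        P (k + 1) ∈ (Finset.univ : Finset (Finset α)).filter (fun S => g j ∈ S) := by
      intro k hk
      simp only [Finset.mem_filter, Finset.mem_univ, true_and] at hk ⊢
      exact hk.2
    have hfib := Finset.sum_fiberwise_of_maps_to hmaps c
    have hLHS : ∑ S ∈ (Finset.univ : Finset (Finset α)).filter (fun S => g j ∈ S), ystar S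
        = ∑ k ∈ (Finset.range n).filter (fun k => g j ∈ P (k + 1)), c k := by
      rw [← hfib]
      refine Finset.sum_congr rfl fun S hS => ?_
      simp only [Finset.mem_filter, Finset.mem_univ, true_and] at hS
      simp only [hystar]
      congr 1
      rw [Finset.filter_filter]
      apply Finset.filter_congr
      intro k _
      constructor
      · intro h; exact ⟨h ▸ hS, h⟩
      · rintro ⟨_, h⟩; exact h
    rw [hLHS]
    have hset : (Finset.range n).filter (fun k => g j ∈ P (k + 1)) = Finset.Ico (j : ℕ) n := by
      ext k
      simp only [Finset.mem_filter, Finset.mem_range, Finset.mem_Ico, hmemP]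
      omega
    rw [hset]
    have htel : ∑ k ∈ Finset.Ico (j : ℕ) n, c k = wseq j - wseq n := by
      rw [Finset.sum_Ico_eq_sub _ (Nat.le_of_lt j.isLt)]
      simp only [hc]
      rw [Finset.sum_range_sub' wseq, Finset.sum_range_sub' wseq]
      ring
    rw [htel, hwseqn, sub_zero]
    simp [hwseq, j.isLt]
  -- value computation
  have hval : ∑ S ∈ (Finset.univ : Finset (Finset α)).filter (fun S => S.Nonempty),
      (matroidRank M ↑S : ℝ) * ystar S = ∑ k ∈ Finset.range n, (R (k + 1) : ℝ) * c k := by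
    have hmaps : ∀ k ∈ Finset.range n,
        P (k + 1) ∈ (Finset.univ : Finset (Finset α)).filter (fun S => S.Nonempty) := by
      intro k hk
      simp only [Finset.mem_range] at hk
      simp only [Finset.mem_filter, Finset.mem_univ, true_and]
      exact ⟨g ⟨k, hk⟩, by rw [hmemP]; exact Nat.lt_succ_self k⟩
    have hfib := Finset.sum_fiberwise_of_maps_to hmaps (fun k => (R (k + 1) : ℝ) * c k)
    rw [← hfib]
    refine Finset.sum_congr rfl fun S hS => ?_
    simp only [hystar, Finset.mul_sum]
    refine Finset.sum_congr rfl fun k hk => ?_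
    simp only [Finset.mem_filter] at hk
    rw [← hk.2]
  -- Abel summation
  have habel : ∑ k ∈ Finset.range n, (R (k + 1) : ℝ) * c k
      = ∑ k ∈ Finset.range n, wseq k * ((R (k + 1) : ℝ) - (R k : ℝ)) := by
    have htel : ∑ k ∈ Finset.range n,
        ((R (k + 1) : ℝ) * wseq (k + 1) - (R k : ℝ) * wseq k)
        = (R n : ℝ) * wseq n - (R 0 : ℝ) * wseq 0 :=
      Finset.sum_range_sub (fun k => (R k : ℝ) * wseq k) n
    rw [hwseqn, hR0] at htel
    simp only [mul_zero, Nat.cast_zero, zero_mul, sub_zero] at htel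
    have hpt : ∀ k, (R (k + 1) : ℝ) * c k
        = wseq k * ((R (k + 1) : ℝ) - (R k : ℝ))
          - ((R (k + 1) : ℝ) * wseq (k + 1) - (R k : ℝ) * wseq k) := by
      intro k
      simp only [hc]
      ring
    simp_rw [hpt]
    rw [Finset.sum_sub_distrib, htel, sub_zero]
  -- greedy independent set
  set Ik : ℕ → Finset α := fun k =>
    Finset.image g (Finset.univ.filter fun j : Fin n => (j : ℕ) < k ∧ R (j : ℕ) < R ((j : ℕ) + 1))
    with hIk
  have hIkmem : ∀ (j : Fin n) (k : ℕ),
      g j ∈ Ik k ↔ (j : ℕ) < k ∧ R (j : ℕ) < R ((j : ℕ) + 1) := by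
    intro j k
    simp only [hIk, Finset.mem_image, Finset.mem_filter, Finset.mem_univ, true_and]
    constructor
    · rintro ⟨i, hi, hgi⟩
      rwa [← hginj hgi]
    · intro h
      exact ⟨j, h, rfl⟩
  have hstep : ∀ k ≤ n, M.Indep ↑(Ik k) ∧ (Ik k).card = R k ∧ Ik k ⊆ P k := by
    intro k
    induction k with
    | zero =>
      intro _
      have h0 : Ik 0 = ∅ := by
        ext e
        obtain ⟨j, rfl⟩ := hgsurj e
        simp [hIkmem]
      rw [h0]
      exact ⟨by simp, by simp [hR0], by simp⟩
    | succ k ih =>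
      intro hk1
      have hk : k < n := hk1
      obtain ⟨hind, hcard, hsub⟩ := ih (Nat.le_of_lt hk)
      by_cases hgood : R k < R (k + 1)
      · -- insert case
        have heq : Ik (k + 1) = insert (g ⟨k, hk⟩) (Ik k) := by
          ext e
          obtain ⟨j, rfl⟩ := hgsurj e
          rw [hIkmem, Finset.mem_insert, hIkmem]
          constructor
          · rintro ⟨hjk, hj⟩
            rcases Nat.lt_succ_iff_lt_or_eq.mp hjk with h | h
            · exact Or.inr ⟨h, hj⟩
            · exact Or.inl (by apply congrArg; exact Fin.ext h)
          · rintro (h | ⟨h1, h2⟩)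
            · have hjk : j = (⟨k, hk⟩ : Fin n) := hginj h
              rw [hjk]
              exact ⟨Nat.lt_succ_self k, hgood⟩
            · exact ⟨by omega, h2⟩
        have hnotmem : g ⟨k, hk⟩ ∉ Ik k := by
          rw [hIkmem]
          simp
        have hindep : M.Indep ↑(Ik (k + 1)) := by
          rw [heq, Finset.coe_insert]
          apply mr_extend hind (Finset.coe_subset.mpr hsub)
          have hPk1 : (insert (g ⟨k, hk⟩) (↑(P k) : Set α)) = ↑(P (k + 1)) := by
            rw [hPstep k hk, Finset.coe_insert]
          rw [hPk1]
          exact hgood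
        refine ⟨hindep, ?_, ?_⟩
        · rw [heq, Finset.card_insert_of_notMem hnotmem, hcard]
          have := hRstep k hk
          omega
        · rw [heq, hPstep k hk]
          exact Finset.insert_subset_insert _ hsub
      · -- no-change case
        have hReq : R (k + 1) = R k := Nat.le_antisymm (by omega) (hRmono k)
        have heq : Ik (k + 1) = Ik k := by
          ext e
          obtain ⟨j, rfl⟩ := hgsurj e
          rw [hIkmem, hIkmem]
          constructor
          · rintro ⟨hjk, hj⟩
            refine ⟨?_, hj⟩
            rcases Nat.lt_succ_iff_lt_or_eq.mp hjk with h | h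
            · exact h
            · exfalso; rw [h] at hj; exact hgood hj
          · rintro ⟨h1, h2⟩
            exact ⟨by omega, h2⟩
        rw [heq, hReq]
        exact ⟨hind, hcard, hsub.trans (fun x hx => by
          obtain ⟨j, rfl⟩ := hgsurj x
          rw [hmemP] at hx ⊢
          omega)⟩
  obtain ⟨hindn, _, _⟩ := hstep n le_rfl
  -- greedy sum equals the Abel sum
  have hsum : ∑ k ∈ Finset.range n, wseq k * ((R (k + 1) : ℝ) - (R k : ℝ))
      = ∑ e ∈ Ik n, w e := by
    rw [Finset.sum_range (fun k => wseq k * ((R (k + 1) : ℝ) - (R k : ℝ)))]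
    rw [hIk, Finset.sum_image (fun a _ b _ h => hginj h)]
    rw [Finset.sum_filter]
    refine Finset.sum_congr rfl fun j _ => ?_
    have hwj : wseq (j : ℕ) = w (g j) := by
      simp [hwseq, j.isLt]
    by_cases hgood : (j : ℕ) < n ∧ R (j : ℕ) < R ((j : ℕ) + 1)
    · have h1 : R ((j : ℕ) + 1) = R (j : ℕ) + 1 := by
        have := hRstep (j : ℕ) j.isLt
        omega
      rw [if_pos hgood, hwj, h1]
      push_cast
      ring
    · have hj : (j : ℕ) < n := j.isLt
      have : ¬ R (j : ℕ) < R ((j : ℕ) + 1) := fun h => hgood ⟨hj, h⟩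
      have h1 : R ((j : ℕ) + 1) = R (j : ℕ) := Nat.le_antisymm (by omega) (hRmono _)
      rw [if_neg hgood, h1]
      ring
  refine ⟨ystar, ?_, ?_, ?_⟩
  · intro S _
    exact Finset.sum_nonneg fun k _ => hcnn k
  · intro e
    exact le_of_eq (hfeas e)
  · rw [hval, habel, hsum]
    exact le_worth (by simp) hindn


lemma mr_singleton_indep (hE : M.E = Set.univ) {e : α} (h : matroidRank M {e} = 1) :
    M.Indep ({e} : Set α) := by
  obtain ⟨J, hJ⟩ := M.exists_isBasis {e} (by rw [hE]; exact Set.subset_univ _)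
  have hcard : J.ncard = 1 := by rw [← mr_eq_ncard_of_basis hE hJ, h]
  have hne : J.Nonempty := by
    rw [Set.nonempty_iff_ne_empty]
    intro h0
    rw [h0] at hcard
    simp at hcard
  have : J = {e} := (Set.Nonempty.subset_singleton_iff hne).mp hJ.subset
  rw [← this]
  exact hJ.indep

end helpers

theorem matroid_game_core_iff_dual_optimal
    {α : Type*} [Fintype α] (M : Matroid α) (hE : M.E = Set.univ)
    (hloopless : ∀ e : α, matroidRank M {e} = 1)
    (w : α → ℝ) (hw : ∀ e, 0 ≤ w e)
    (y : Finset α → ℝ) (hy : ∀ S : Finset α, S.Nonempty → 0 ≤ y S) :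
    -- `y` is in the core of the matroid independent set game
    ((∑ S ∈ (Finset.univ : Finset (Finset α)).filter (fun S => S.Nonempty),
        (matroidRank M ↑S : ℝ) * y S = matroidWorth M w Set.univ) ∧
      ∀ T : Finset α,
        matroidWorth M w ↑T ≤
          ∑ S ∈ (Finset.univ : Finset (Finset α)).filter (fun S => (S ∩ T).Nonempty),
            (matroidRank M ↑(S ∩ T) : ℝ) * y S)
    ↔
    -- `y` is an optimal solution of the dual LP
    ((∀ e : α, w e ≤ ∑ S ∈ (Finset.univ : Finset (Finset α)).filter (fun S => e ∈ S), y S) ∧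
      ∀ y' : Finset α → ℝ, (∀ S : Finset α, S.Nonempty → 0 ≤ y' S) →
        (∀ e : α, w e ≤ ∑ S ∈ (Finset.univ : Finset (Finset α)).filter (fun S => e ∈ S), y' S) →
        ∑ S ∈ (Finset.univ : Finset (Finset α)).filter (fun S => S.Nonempty),
            (matroidRank M ↑S : ℝ) * y S ≤
          ∑ S ∈ (Finset.univ : Finset (Finset α)).filter (fun S => S.Nonempty),
            (matroidRank M ↑S : ℝ) * y' S) := by
  have weak_univ : ∀ (y' : Finset α → ℝ), (∀ S : Finset α, S.Nonempty → 0 ≤ y' S) →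
      (∀ e : α, w e ≤ ∑ S ∈ (Finset.univ : Finset (Finset α)).filter (fun S => e ∈ S), y' S) →
      matroidWorth M w Set.univ ≤
        ∑ S ∈ (Finset.univ : Finset (Finset α)).filter (fun S => S.Nonempty),
          (matroidRank M ↑S : ℝ) * y' S := by
    intro y' hy' hfeas'
    have := weak_duality hE w y' hy' hfeas' Finset.univ
    simpa [Finset.inter_univ] using this
  constructor
  · rintro ⟨hcore1, hcore2⟩
    have hfeas : ∀ e : α,
        w e ≤ ∑ S ∈ (Finset.univ : Finset (Finset α)).filter (fun S => e ∈ S), y S := by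
      intro e
      have h1 : w e ≤ matroidWorth M w ↑({e} : Finset α) := by
        have := le_worth (M := M) w (T := (↑({e} : Finset α) : Set α)) (I := {e})
          (by simp) (by simpa using mr_singleton_indep hE (hloopless e))
        simpa using this
      have h2 := hcore2 {e}
      have hfilt : (Finset.univ : Finset (Finset α)).filter
            (fun S => (S ∩ ({e} : Finset α)).Nonempty)
          = (Finset.univ : Finset (Finset α)).filter (fun S => e ∈ S) := by
        ext S
        simp [Finset.Nonempty]
      rw [hfilt] at h2
      refine h1.trans (h2.trans (le_of_eq ?_))
      refine Finset.sum_congr rfl fun S hS => ?_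
      simp only [Finset.mem_filter, Finset.mem_univ, true_and] at hS
      rw [Finset.inter_singleton_of_mem hS]
      simp [hloopless e]
    refine ⟨hfeas, ?_⟩
    intro y' hy' hfeas'
    rw [hcore1]
    exact weak_univ y' hy' hfeas'
  · rintro ⟨hfeas, hopt⟩
    refine ⟨?_, fun T => weak_duality hE w y hy hfeas T⟩
    apply le_antisymm
    · obtain ⟨ystar, h1, h2, h3⟩ := strong_duality hE w hw
      exact (hopt ystar h1 h2).trans h3
    · exact weak_univ y hy hfeas
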